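/- arXiv:2006.13155 — 2 statements merged into one kernel-verified Lean document; each statement's English description precedes it below -/
import Mathlib

section
/- Suppose β ≤ min{1, w₁, w₂, w₃}. Then the weighted Łukasiewicz conjunction is associative in the sense that ^β((^β(x₁^{w₁} ⊗ x₂^{w₂}))^{⊗1} ⊗ x₃^{w₃}) = ^β(x₁^{w₁} ⊗ (^β(x₂^{w₂} ⊗ x₃^{w₃}))^{⊗1}) for all x₁,x₂,x₃ ∈ [0,1]. -/
/-- Binary weighted Łukasiewicz conjunction with bias `β` and weights `u, v`. -/
def wConj2 (β u v a b : ℝ) : ℝ := max 0 (min 1 (β - u * (1 - a) - v * (1 - b)))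

lemma wconj_key (β A B C : ℝ) (hβ : 0 ≤ β) (hβ1 : β ≤ 1) (hA : 0 ≤ A) (hB : 0 ≤ B)
    (hC : 0 ≤ C) :
    max 0 (min 1 (β - (1 - max 0 (min 1 (β - A - B))) - C)) = max 0 (2*β - 1 - A - B - C) := by
  have h1 : min 1 (β - A - B) = β - A - B := min_eq_right (by linarith)
  rw [h1]
  rcases le_total (β - A - B) 0 with h | h
  · rw [max_eq_left h, min_eq_right (by linarith), max_eq_left (by linarith),
      max_eq_left (by linarith)]
  · rw [max_eq_right h, min_eq_right (by linarith)]
    congr 1; ring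

/-- If `β ≤ min {1, w₁, w₂, w₃}`, the weighted Łukasiewicz conjunction is associative. -/
theorem weighted_lukasiewicz_conj_assoc (β w1 w2 w3 x1 x2 x3 : ℝ)
    (hβ : 0 ≤ β) (hw1 : 0 ≤ w1) (hw2 : 0 ≤ w2) (hw3 : 0 ≤ w3)
    (hβ1 : β ≤ 1) (hβw1 : β ≤ w1) (hβw2 : β ≤ w2) (hβw3 : β ≤ w3)
    (hx1 : x1 ∈ Set.Icc (0:ℝ) 1) (hx2 : x2 ∈ Set.Icc (0:ℝ) 1)
    (hx3 : x3 ∈ Set.Icc (0:ℝ) 1) :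
    wConj2 β 1 w3 (wConj2 β w1 w2 x1 x2) x3 =
      wConj2 β w1 1 x1 (wConj2 β w2 w3 x2 x3) := by
  obtain ⟨h1a, h1b⟩ := hx1
  obtain ⟨h2a, h2b⟩ := hx2
  obtain ⟨h3a, h3b⟩ := hx3
  have hA : 0 ≤ w1 * (1 - x1) := mul_nonneg hw1 (by linarith)
  have hB : 0 ≤ w2 * (1 - x2) := mul_nonneg hw2 (by linarith)
  have hC : 0 ≤ w3 * (1 - x3) := mul_nonneg hw3 (by linarith)
  simp only [wConj2, one_mul]
  have e1 : β - (1 - max 0 (min 1 (β - w1 * (1 - x1) - w2 * (1 - x2)))) - w3 * (1 - x3)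
      = β - (1 - max 0 (min 1 (β - w1 * (1 - x1) - w2 * (1 - x2)))) - w3 * (1 - x3) := rfl
  have e2 : β - w1 * (1 - x1) - (1 - max 0 (min 1 (β - w2 * (1 - x2) - w3 * (1 - x3))))
      = β - (1 - max 0 (min 1 (β - w2 * (1 - x2) - w3 * (1 - x3)))) - w1 * (1 - x1) := by
    ring
  rw [e2, wconj_key β _ _ _ hβ hβ1 hA hB hC, wconj_key β _ _ _ hβ hβ1 hB hC hA]
  congr 1; ring
end

section
/- Given a threshold α with 1/2 < α ≤ 1 and parameters satisfying (i) α·wᵢ - β + 1 ≥ α for all i and (ii) Σᵢ (1-α)·wᵢ - β + 1 ≤ 1 - α, the weighted Łukasiewicz disjunction ⊕^β(x₁^{w₁},...,xₙ^{wₙ}) = max(0, min(1, 1 - β + Σᵢ wᵢxᵢ)) returns a value ≥ α whenever some input xⱼ ≥ α (with all other inputs ≥ 0), and returns a value ≤ 1-α whenever all inputs xᵢ ≤ 1-α. -/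
/-- Under the classicality constraints, the weighted Łukasiewicz disjunction returns a
value `≥ α` whenever some input is `≥ α`, and `≤ 1 - α` whenever all inputs are `≤ 1 - α`. -/
theorem weighted_lukasiewicz_disj_classical_constraints (n : ℕ) (w : Fin n → ℝ) (β α : ℝ)
    (hw : ∀ i, 0 ≤ w i) (hβ : 0 ≤ β) (hα1 : 1/2 < α) (hα2 : α ≤ 1)
    (hconstr1 : ∀ i, α * w i - β + 1 ≥ α)
    (hconstr2 : (∑ i, (1 - α) * w i) - β + 1 ≤ 1 - α) :
    (∀ x : Fin n → ℝ, (∀ i, 0 ≤ x i ∧ x i ≤ 1) → (∃ j, α ≤ x j) →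
      α ≤ max 0 (min 1 (1 - β + ∑ i, w i * x i))) ∧
    (∀ x : Fin n → ℝ, (∀ i, 0 ≤ x i ∧ x i ≤ 1) → (∀ i, x i ≤ 1 - α) →
      max 0 (min 1 (1 - β + ∑ i, w i * x i)) ≤ 1 - α) := by
  constructor
  · intro x hx ⟨j, hj⟩
    have hsum : w j * α ≤ ∑ i, w i * x i := by
      calc w j * α ≤ w j * x j := by
            exact mul_le_mul_of_nonneg_left hj (hw j)
        _ ≤ ∑ i, w i * x i := by
            apply Finset.single_le_sum (f := fun i => w i * x i)
            · intro i _
              exact mul_nonneg (hw i) (hx i).1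
            · exact Finset.mem_univ j
    have h1 : α ≤ 1 - β + ∑ i, w i * x i := by
      have := hconstr1 j
      nlinarith
    refine le_max_of_le_right (le_min hα2 h1)
  · intro x hx hle
    have hsum : ∑ i, w i * x i ≤ ∑ i, (1 - α) * w i := by
      apply Finset.sum_le_sum
      intro i _
      calc w i * x i ≤ w i * (1 - α) := mul_le_mul_of_nonneg_left (hle i) (hw i)
        _ = (1 - α) * w i := mul_comm _ _
    have h0 : (0:ℝ) ≤ 1 - α := by linarith
    refine max_le h0 (le_trans (min_le_right _ _) (by linarith))
end
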